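/- Let H : ℝⁿ → ℝ be a C¹ function defined on the open unit ball Dⁿ = {p : |p| < 1} with compact support in Dⁿ, and suppose H(0) > c for some c > 0. Then the image of the gradient map p ↦ ∇H(p) contains the closed Euclidean ball of radius c centered at the origin. -/

import Mathlib

open Metric

theorem stmt0 {n : ℕ} (H : EuclideanSpace ℝ (Fin n) → ℝ) (c : ℝ)
    (hH : ContDiff ℝ 1 H) (hsupp : HasCompactSupport H)
    (hsupp' : tsupport H ⊆ ball (0 : EuclideanSpace ℝ (Fin n)) 1)
    (hc : 0 < c) (h0 : c < H 0) :
    ∀ v : EuclideanSpace ℝ (Fin n), ‖v‖ ≤ c →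
      ∃ p : EuclideanSpace ℝ (Fin n), ‖p‖ < 1 ∧ gradient H p = v := by
  intro v hv
  set F : EuclideanSpace ℝ (Fin n) → ℝ := fun p => H p - inner ℝ v p with hF
  have hFc : Continuous F := (hH.continuous).sub (innerSL ℝ v).continuous
  obtain ⟨p₀, hp₀mem, hmax⟩ :=
    (isCompact_closedBall (0 : EuclideanSpace ℝ (Fin n)) 1).exists_isMaxOn
      ⟨0, mem_closedBall_self zero_le_one⟩ hFc.continuousOn
  have hF0 : F 0 = H 0 := by simp [hF]
  have hp₀lt : ‖p₀‖ < 1 := by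
    by_contra h
    have h1 : ‖p₀‖ = 1 := le_antisymm (by simpa using hp₀mem) (le_of_not_gt h)
    have hH0 : H p₀ = 0 := by
      apply image_eq_zero_of_notMem_tsupport
      intro hmem
      have := hsupp' hmem
      simp [mem_ball, dist_eq_norm, h1] at this
    have hFle : F p₀ ≤ c := by
      have : |inner ℝ v p₀| ≤ ‖v‖ * ‖p₀‖ := abs_real_inner_le_norm v p₀
      have h2 : -(inner ℝ v p₀ : ℝ) ≤ c := by
        nlinarith [abs_nonneg (inner ℝ v p₀ : ℝ), neg_abs_le (inner ℝ v p₀ : ℝ)]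
      simpa [hF, hH0] using h2
    have h3 : F 0 ≤ F p₀ := hmax (mem_closedBall_self zero_le_one)
    rw [hF0] at h3
    linarith
  have hloc : IsLocalMax F p₀ :=
    hmax.isLocalMax (Filter.mem_of_superset (ball_mem_nhds p₀ (by linarith [hp₀lt] : (0:ℝ) < 1 - ‖p₀‖)) ?_)
  · have hd : HasFDerivAt F (fderiv ℝ H p₀ - innerSL ℝ v) p₀ :=
      ((hH.differentiable one_ne_zero).differentiableAt.hasFDerivAt).sub (innerSL ℝ v).hasFDerivAt
    have hzero := hloc.hasFDerivAt_eq_zero hd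
    have hfd : fderiv ℝ H p₀ = innerSL ℝ v := sub_eq_zero.mp hzero
    refine ⟨p₀, hp₀lt, ?_⟩
    have : gradient H p₀ = (InnerProductSpace.toDual ℝ _).symm (fderiv ℝ H p₀) := rfl
    rw [this, hfd]
    apply (InnerProductSpace.toDual ℝ _).injective
    ext y
    simp [InnerProductSpace.toDual_apply_apply]
  · intro x hx
    simp only [mem_ball, mem_closedBall, dist_eq_norm] at hx ⊢
    have := norm_sub_norm_le x p₀
    have : ‖x‖ ≤ ‖x - p₀‖ + ‖p₀‖ := by
      have := norm_add_le (x - p₀) p₀; simpa using this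
    rw [sub_zero]
    linarith [hx]
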